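/- arXiv:1212.3378 — 5 statements merged into one kernel-verified Lean document; each statement's English description precedes it below -/
import Mathlib

section
/- Suppose a measurement device can be programmed to perform any one of n pairwise distinct projective measurements {Π_k^{(i)}}_k (i = 1,…,n) on a system Hilbert space H_s, using program states ρ_1,…,ρ_n on H_a: there is a single POVM {E_k} on H_s ⊗ H_a with Tr(E_k(ρ ⊗ ρ_i)) = Tr(Π_k^{(i)} ρ) for all states ρ, all k, and all i. Then the program states ρ_1,…,ρ_n have mutually orthogonal supports, and consequently dim H_a ≥ n. -/
open Matrix
open scoped ComplexOrder Kronecker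

section Aux

open scoped MatrixOrder

variable {m n p q : Type*} [Fintype m] [Fintype n] [DecidableEq m] [DecidableEq n]

private lemma trace_ctms_nonneg (A : Matrix m n ℂ) : 0 ≤ (Aᴴ * A).trace := by
  apply Finset.sum_nonneg
  intro j _
  have h : (Aᴴ * A) j j = dotProduct (star fun i => A i j) (fun i => A i j) := by
    simp [Matrix.mul_apply, Matrix.conjTranspose_apply, dotProduct]
  simpa [Matrix.diag] using h ▸ dotProduct_star_self_nonneg (fun i => A i j)

private lemma trace_ctms_eq_zero (A : Matrix m n ℂ) (h : (Aᴴ * A).trace = 0) : A = 0 := by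
  have hnn : ∀ j ∈ Finset.univ, (0:ℂ) ≤ (Aᴴ * A).diag j := by
    intro j _
    have h' : (Aᴴ * A) j j = dotProduct (star fun i => A i j) (fun i => A i j) := by
      simp [Matrix.mul_apply, Matrix.conjTranspose_apply, dotProduct]
    simpa [Matrix.diag] using h' ▸ dotProduct_star_self_nonneg (fun i => A i j)
  have hz := (Finset.sum_eq_zero_iff_of_nonneg hnn).mp h
  ext i j
  have hd : (Aᴴ * A) j j = 0 := hz j (Finset.mem_univ j)
  have h' : (Aᴴ * A) j j = dotProduct (star fun i => A i j) (fun i => A i j) := by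
    simp [Matrix.mul_apply, Matrix.conjTranspose_apply, dotProduct]
  rw [h'] at hd
  have := dotProduct_star_self_eq_zero.mp hd
  simpa using congr_fun this i

private lemma psd_trace_nonneg {A : Matrix n n ℂ} (hA : A.PosSemidef) : 0 ≤ A.trace := by
  have h : A = (CFC.sqrt A)ᴴ * (CFC.sqrt A) := by
    rw [(CFC.sqrt_nonneg A).posSemidef.1.eq, (CFC.sqrt_mul_sqrt_self A hA.nonneg)]
  rw [h]; exact trace_ctms_nonneg _

private lemma psd_trace_zero {A : Matrix n n ℂ} (hA : A.PosSemidef) (h : A.trace = 0) :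
    A = 0 := by
  have hs : A = (CFC.sqrt A)ᴴ * (CFC.sqrt A) := by
    rw [(CFC.sqrt_nonneg A).posSemidef.1.eq, (CFC.sqrt_mul_sqrt_self A hA.nonneg)]
  have := trace_ctms_eq_zero (CFC.sqrt A) (by rw [← hs]; exact h)
  rw [hs, this]; simp

/-- If `E, X` are PSD and `Tr(E X) = 0` then `E X = 0`. -/
private lemma psd_mul_psd_trace_zero {E X : Matrix n n ℂ} (hE : E.PosSemidef)
    (hX : X.PosSemidef) (h : (E * X).trace = 0) : E * X = 0 := by
  have hEherm : (CFC.sqrt E)ᴴ = (CFC.sqrt E) := (CFC.sqrt_nonneg E).posSemidef.1.eq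
  have hXherm : (CFC.sqrt X)ᴴ = (CFC.sqrt X) := (CFC.sqrt_nonneg X).posSemidef.1.eq
  have hkey : ((CFC.sqrt E) * (CFC.sqrt X))ᴴ * ((CFC.sqrt E) * (CFC.sqrt X)) = (CFC.sqrt X) * E * (CFC.sqrt X) := by
    rw [Matrix.conjTranspose_mul, hEherm, hXherm]
    calc (CFC.sqrt X) * (CFC.sqrt E) * ((CFC.sqrt E) * (CFC.sqrt X))
        = (CFC.sqrt X) * ((CFC.sqrt E) * (CFC.sqrt E)) * (CFC.sqrt X) := by noncomm_ring
      _ = (CFC.sqrt X) * E * (CFC.sqrt X) := by rw [(CFC.sqrt_mul_sqrt_self E hE.nonneg)]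
  have htr : (((CFC.sqrt E) * (CFC.sqrt X))ᴴ * ((CFC.sqrt E) * (CFC.sqrt X))).trace = 0 := by
    rw [hkey, Matrix.trace_mul_cycle, (CFC.sqrt_mul_sqrt_self X hX.nonneg), Matrix.trace_mul_comm]
    exact h
  have hzero : (CFC.sqrt E) * (CFC.sqrt X) = 0 := trace_ctms_eq_zero _ htr
  calc E * X = (CFC.sqrt E) * ((CFC.sqrt E) * (CFC.sqrt X)) * (CFC.sqrt X) := by
        rw [← Matrix.mul_assoc, Matrix.mul_assoc (CFC.sqrt E) (CFC.sqrt E) (CFC.sqrt X), ← Matrix.mul_assoc,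
          (CFC.sqrt_mul_sqrt_self E hE.nonneg), Matrix.mul_assoc, (CFC.sqrt_mul_sqrt_self X hX.nonneg)]
    _ = 0 := by rw [hzero]; simp

private lemma kron_conjTranspose (A : Matrix m m ℂ) (B : Matrix n n ℂ) :
    (A ⊗ₖ B)ᴴ = Aᴴ ⊗ₖ Bᴴ := by
  ext ⟨i1, i2⟩ ⟨j1, j2⟩
  simp [Matrix.conjTranspose_apply, Matrix.kroneckerMap_apply]

private lemma kron_psd {A : Matrix m m ℂ} {B : Matrix n n ℂ} (hA : A.PosSemidef)
    (hB : B.PosSemidef) : (A ⊗ₖ B).PosSemidef := by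
  have h : A ⊗ₖ B = ((CFC.sqrt A) ⊗ₖ (CFC.sqrt B))ᴴ * ((CFC.sqrt A) ⊗ₖ (CFC.sqrt B)) := by
    rw [kron_conjTranspose, (CFC.sqrt_nonneg A).posSemidef.1.eq, (CFC.sqrt_nonneg B).posSemidef.1.eq,
      ← Matrix.mul_kronecker_mul, (CFC.sqrt_mul_sqrt_self A hA.nonneg), (CFC.sqrt_mul_sqrt_self B hB.nonneg)]
  exact h ▸ Matrix.posSemidef_conjTranspose_mul_self _

private lemma kron_right_cancel {A B : Matrix m m ℂ} {C : Matrix n n ℂ}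
    (h : A ⊗ₖ C = B ⊗ₖ C) (hC : C ≠ 0) : A = B := by
  obtain ⟨x, y, hxy⟩ : ∃ x y, C x y ≠ 0 := by
    by_contra hc
    push_neg at hc
    exact hC (Matrix.ext fun x y => hc x y)
  ext u v
  have := Matrix.ext_iff.mpr h (u, x) (v, y)
  simp only [Matrix.kroneckerMap_apply] at this
  exact mul_right_cancel₀ hxy this

end Aux

/-- No-programming theorem for projective measurements: if one POVM `{E_k}` on
system⊗program programs `n` pairwise distinct projective measurements
`{P i k}_k` via program states `ρ i`, then the program states have mutually
orthogonal supports, and hence `dim H_a ≥ n`. -/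
theorem no_programming_projective_measurements
    {s a κ : Type*} [Fintype s] [DecidableEq s] [Fintype a] [DecidableEq a] [Fintype κ]
    (n : ℕ) (P : Fin n → κ → Matrix s s ℂ)
    (hherm : ∀ i k, (P i k).IsHermitian)
    (hidem : ∀ i k, P i k * P i k = P i k)
    (horth : ∀ i k l, k ≠ l → P i k * P i l = 0)
    (hsum : ∀ i, ∑ k, P i k = 1)
    (hdist : ∀ i j, i ≠ j → P i ≠ P j)
    (ρ : Fin n → Matrix a a ℂ)
    (hρ : ∀ i, (ρ i).PosSemidef ∧ (ρ i).trace = 1)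
    (E : κ → Matrix (s × a) (s × a) ℂ)
    (hEpos : ∀ k, (E k).PosSemidef) (hEsum : ∑ k, E k = 1)
    (hsim : ∀ i k, ∀ σ : Matrix s s ℂ, σ.PosSemidef → σ.trace = 1 →
      (E k * (σ ⊗ₖ ρ i)).trace = (P i k * σ).trace) :
    (∀ i j, i ≠ j → ρ i * ρ j = 0) ∧ n ≤ Fintype.card a := by
  classical
  -- extend the simulation hypothesis to all PSD σ by scaling
  have hsim' : ∀ i k, ∀ σ : Matrix s s ℂ, σ.PosSemidef →
      (E k * (σ ⊗ₖ ρ i)).trace = (P i k * σ).trace := by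
    intro i k σ hσ
    by_cases h0 : σ.trace = 0
    · have hz : σ = 0 := psd_trace_zero hσ h0
      simp [hz]
    · set c := σ.trace with hc
      have hcnn : 0 ≤ c := psd_trace_nonneg hσ
      have him : c.im = 0 := by
        have := (Complex.le_def.mp hcnn).2
        simpa using this.symm
      set r := c.re with hr
      have hcr : c = (r : ℂ) := by
        apply Complex.ext <;> simp [him, hr]
      have hrne : (r : ℂ) ≠ 0 := by rw [← hcr]; exact h0
      set σ' : Matrix s s ℂ := ((r : ℂ))⁻¹ • σ with hσ'def
      have hσ'psd : σ'.PosSemidef := by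
        refine Matrix.PosSemidef.of_dotProduct_mulVec_nonneg ?_ ?_
        · show σ'ᴴ = σ'
          rw [hσ'def, Matrix.conjTranspose_smul, hσ.1.eq]
          congr 1
          simp [← Complex.ofReal_inv]
        · intro x
          rw [hσ'def, Matrix.smul_mulVec, dotProduct_smul]
          have hinv : (0:ℂ) ≤ ((r:ℂ))⁻¹ := by
            rw [← Complex.ofReal_inv]
            rw [Complex.zero_le_real]
            have : (0:ℝ) ≤ r := by
              have := (Complex.le_def.mp hcnn).1; simpa using this
            positivity
          exact mul_nonneg hinv (hσ.dotProduct_mulVec_nonneg x)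
      have hσ'tr : σ'.trace = 1 := by
        rw [hσ'def, Matrix.trace_smul, smul_eq_mul, ← hc, hcr, inv_mul_cancel₀ hrne]
      have heq := hsim i k σ' hσ'psd hσ'tr
      have hback : σ = (r : ℂ) • σ' := by
        rw [hσ'def, smul_smul, mul_inv_cancel₀ hrne, one_smul]
      rw [hback, Matrix.smul_kronecker, Matrix.mul_smul, Matrix.trace_smul,
        Matrix.mul_smul, Matrix.trace_smul, heq]
  -- positivity facts
  have hPpsd : ∀ i k, (P i k).PosSemidef := by
    intro i k
    have h : P i k = (P i k)ᴴ * (P i k) := by rw [(hherm i k).eq, hidem]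
    exact h ▸ Matrix.posSemidef_conjTranspose_mul_self _
  have hQpsd : ∀ i k, ((1 : Matrix s s ℂ) - P i k).PosSemidef := by
    intro i k
    have hherm' : ((1 : Matrix s s ℂ) - P i k)ᴴ = 1 - P i k := by
      rw [Matrix.conjTranspose_sub, Matrix.conjTranspose_one, (hherm i k).eq]
    have h : (1 : Matrix s s ℂ) - P i k =
        ((1 : Matrix s s ℂ) - P i k)ᴴ * ((1 : Matrix s s ℂ) - P i k) := by
      rw [hherm', Matrix.sub_mul, Matrix.one_mul, Matrix.mul_sub, Matrix.mul_one,
        hidem i k, sub_self, sub_zero]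
    exact h ▸ Matrix.posSemidef_conjTranspose_mul_self _
  have hEc : ∀ k, ((1 : Matrix (s × a) (s × a) ℂ) - E k).PosSemidef := by
    intro k
    have h : (1 : Matrix (s × a) (s × a) ℂ) - E k = ∑ l ∈ Finset.univ.erase k, E l := by
      rw [← hEsum, ← Finset.add_sum_erase _ _ (Finset.mem_univ k)]
      abel
    rw [h]
    refine Finset.sum_induction _ _ (fun A B hA hB => hA.add hB) Matrix.PosSemidef.zero
      (fun l _ => hEpos l)
  -- key identity : E k * (1 ⊗ ρ i) = P i k ⊗ ρ i
  have keyfull : ∀ i k, E k * ((1 : Matrix s s ℂ) ⊗ₖ ρ i) = (P i k) ⊗ₖ ρ i := by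
    intro i k
    have hXpsd : ((P i k) ⊗ₖ ρ i).PosSemidef := kron_psd (hPpsd i k) (hρ i).1
    have hYpsd : (((1 : Matrix s s ℂ) - P i k) ⊗ₖ ρ i).PosSemidef :=
      kron_psd (hQpsd i k) (hρ i).1
    -- part 1 : E k acts as identity on (P i k) ⊗ ρ i
    have h1 : E k * ((P i k) ⊗ₖ ρ i) = (P i k) ⊗ₖ ρ i := by
      have htr : (E k * ((P i k) ⊗ₖ ρ i)).trace = ((P i k) ⊗ₖ ρ i).trace := by
        rw [hsim' i k (P i k) (hPpsd i k), hidem, Matrix.trace_kronecker, (hρ i).2, mul_one]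
      have h0 : (((1 : Matrix (s × a) (s × a) ℂ) - E k) * ((P i k) ⊗ₖ ρ i)).trace = 0 := by
        rw [Matrix.sub_mul, Matrix.one_mul, Matrix.trace_sub, htr, sub_self]
      have := psd_mul_psd_trace_zero (hEc k) hXpsd h0
      rw [Matrix.sub_mul, Matrix.one_mul, sub_eq_zero] at this
      exact this.symm
    -- part 2 : E k kills (1 - P i k) ⊗ ρ i
    have h2 : E k * (((1 : Matrix s s ℂ) - P i k) ⊗ₖ ρ i) = 0 := by
      have htr : (E k * (((1 : Matrix s s ℂ) - P i k) ⊗ₖ ρ i)).trace = 0 := by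
        rw [hsim' i k _ (hQpsd i k), Matrix.mul_sub, Matrix.mul_one, hidem, sub_self,
          Matrix.trace_zero]
      exact psd_mul_psd_trace_zero (hEpos k) hYpsd htr
    have hsplit : (1 : Matrix s s ℂ) ⊗ₖ ρ i =
        (P i k) ⊗ₖ ρ i + ((1 : Matrix s s ℂ) - P i k) ⊗ₖ ρ i := by
      rw [← Matrix.add_kronecker, add_sub_cancel]
    rw [hsplit, Matrix.mul_add, h1, h2, add_zero]
  -- orthogonality of the program states
  have horthρ : ∀ i j, i ≠ j → ρ i * ρ j = 0 := by
    intro i j hij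
    by_contra hne
    have hji : ρ j * ρ i ≠ 0 := by
      intro h
      apply hne
      have : ρ i * ρ j = (ρ j * ρ i)ᴴ := by
        rw [Matrix.conjTranspose_mul, (hρ i).1.1.eq, (hρ j).1.1.eq]
      rw [this, h, Matrix.conjTranspose_zero]
    have hk : ∀ k, P i k = P j k := by
      intro k
      have h1 := keyfull i k
      have h2 := keyfull j k
      have h2' : ((1 : Matrix s s ℂ) ⊗ₖ ρ j) * E k = (P j k) ⊗ₖ ρ j := by
        have hc := congrArg Matrix.conjTranspose h2
        rw [Matrix.conjTranspose_mul, kron_conjTranspose, kron_conjTranspose,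
          Matrix.conjTranspose_one, (hρ j).1.1.eq, (hherm j k).eq, (hEpos k).1.eq] at hc
        exact hc
      have h3 : (P i k) ⊗ₖ (ρ j * ρ i) = (P j k) ⊗ₖ (ρ j * ρ i) := by
        calc (P i k) ⊗ₖ (ρ j * ρ i)
            = ((1 : Matrix s s ℂ) * P i k) ⊗ₖ (ρ j * ρ i) := by rw [Matrix.one_mul]
          _ = ((1 : Matrix s s ℂ) ⊗ₖ ρ j) * ((P i k) ⊗ₖ ρ i) := by
              rw [Matrix.mul_kronecker_mul]
          _ = ((1 : Matrix s s ℂ) ⊗ₖ ρ j) * (E k * ((1 : Matrix s s ℂ) ⊗ₖ ρ i)) := by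
              rw [h1]
          _ = (((1 : Matrix s s ℂ) ⊗ₖ ρ j) * E k) * ((1 : Matrix s s ℂ) ⊗ₖ ρ i) := by
              rw [Matrix.mul_assoc]
          _ = ((P j k) ⊗ₖ ρ j) * ((1 : Matrix s s ℂ) ⊗ₖ ρ i) := by rw [h2']
          _ = (P j k * 1) ⊗ₖ (ρ j * ρ i) := by rw [Matrix.mul_kronecker_mul]
          _ = (P j k) ⊗ₖ (ρ j * ρ i) := by rw [Matrix.mul_one]
      exact kron_right_cancel h3 hji
    exact hdist i j hij (funext hk)
  refine ⟨horthρ, ?_⟩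
  -- dimension bound
  have hvec : ∀ i, ∃ v : a → ℂ, ρ i *ᵥ v ≠ 0 := by
    intro i
    by_contra h
    push_neg at h
    have hzero : ρ i = 0 := by
      ext x y
      have := congr_fun (h (Pi.single y 1)) x
      simpa [Matrix.mulVec, dotProduct, Pi.single_apply] using this
    have := (hρ i).2
    rw [hzero, Matrix.trace_zero] at this
    exact zero_ne_one this
  choose v hv using hvec
  set w : Fin n → (a → ℂ) := fun i => ρ i *ᵥ v i with hw
  have hww : ∀ i j, i ≠ j → dotProduct (star (w i)) (w j) = 0 := by
    intro i j hij
    rw [hw]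
    simp only
    rw [Matrix.star_mulVec, Matrix.dotProduct_mulVec, Matrix.vecMul_vecMul,
      (hρ i).1.1.eq]
    rw [horthρ i j hij]
    simp
  have hw0 : ∀ i, w i ≠ 0 := fun i => hv i
  have hli : LinearIndependent ℂ w := by
    rw [linearIndependent_iff']
    intro t g hg i hi
    have hlin : dotProduct (star (w i)) (∑ j ∈ t, g j • w j)
        = ∑ j ∈ t, dotProduct (star (w i)) (g j • w j) := by
      simp only [dotProduct, Finset.sum_apply, Finset.mul_sum]
      exact Finset.sum_comm
    have hdg := congrArg (fun u => dotProduct (star (w i)) u) hg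
    simp only [dotProduct_zero] at hdg
    rw [hlin] at hdg
    have hsum' : ∑ j ∈ t, dotProduct (star (w i)) (g j • w j)
        = g i * dotProduct (star (w i)) (w i) := by
      rw [Finset.sum_eq_single i]
      · rw [dotProduct_smul, smul_eq_mul]
      · intro b _ hbi
        rw [dotProduct_smul, smul_eq_mul, hww i b (Ne.symm hbi), mul_zero]
      · intro habs; exact absurd hi habs
    rw [hsum'] at hdg
    rcases mul_eq_zero.mp hdg with h | h
    · exact h
    · exact absurd (dotProduct_star_self_eq_zero.mp h) (hw0 i)
  have hcard := hli.fintype_card_le_finrank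
  simpa [Module.finrank_pi] using hcard
end

section
/- If there exists a POVM {E_+, E_-} on ℂ²⊗H_a and unit vectors |φ_z⟩, |φ_x⟩ in H_a such that the device outputs '+' with certainty on input |+z⟩⊗|φ_z⟩ and on input |+x⟩⊗|φ_x⟩, and outputs '−' with certainty on inputs |−z⟩⊗|φ_z⟩ and |−x⟩⊗|φ_x⟩, then |φ_z⟩ and |φ_x⟩ are orthogonal. -/
open Matrix
open scoped ComplexOrder

lemma tensor_dot {a : Type*} [Fintype a] (u v : Fin 2 → ℂ) (f g : a → ℂ) :
    star (fun p : Fin 2 × a => u p.1 * f p.2) ⬝ᵥ (fun p : Fin 2 × a => v p.1 * g p.2)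
      = (star u ⬝ᵥ v) * (star f ⬝ᵥ g) := by
  simp only [dotProduct, Pi.star_apply, StarMul.star_mul, Fintype.sum_prod_type,
    Finset.sum_mul_sum]
  refine Finset.sum_congr rfl fun i _ => Finset.sum_congr rfl fun j _ => by ring


/-- If a two-outcome POVM `{E₊, I−E₊}` on ℂ²⊗H_a outputs '+' with certainty on
`|+z⟩⊗|φ_z⟩` and `|+x⟩⊗|φ_x⟩`, and '−' with certainty on `|−z⟩⊗|φ_z⟩` and
`|−x⟩⊗|φ_x⟩`, then `⟨φ_z|φ_x⟩ = 0`. -/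
theorem spin_programming_orthogonality
    {a : Type*} [Fintype a] [DecidableEq a]
    (φz φx : a → ℂ) (hφz : star φz ⬝ᵥ φz = 1) (hφx : star φx ⬝ᵥ φx = 1)
    (E : Matrix (Fin 2 × a) (Fin 2 × a) ℂ)
    (hE : E.PosSemidef) (hE' : (1 - E).PosSemidef)
    (zp : Fin 2 → ℂ) (zm : Fin 2 → ℂ) (xp : Fin 2 → ℂ) (xm : Fin 2 → ℂ)
    (hzp : zp = ![1, 0]) (hzm : zm = ![0, 1])
    (hxp : xp = ![(Real.sqrt 2 : ℂ)⁻¹, (Real.sqrt 2 : ℂ)⁻¹])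
    (hxm : xm = ![(Real.sqrt 2 : ℂ)⁻¹, -(Real.sqrt 2 : ℂ)⁻¹])
    (hpz : star (fun p : Fin 2 × a => zp p.1 * φz p.2) ⬝ᵥ
        (E *ᵥ fun p : Fin 2 × a => zp p.1 * φz p.2) = 1)
    (hpx : star (fun p : Fin 2 × a => xp p.1 * φx p.2) ⬝ᵥ
        (E *ᵥ fun p : Fin 2 × a => xp p.1 * φx p.2) = 1)
    (hmz : star (fun p : Fin 2 × a => zm p.1 * φz p.2) ⬝ᵥ
        (E *ᵥ fun p : Fin 2 × a => zm p.1 * φz p.2) = 0)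
    (hmx : star (fun p : Fin 2 × a => xm p.1 * φx p.2) ⬝ᵥ
        (E *ᵥ fun p : Fin 2 × a => xm p.1 * φx p.2) = 0) :
    star φz ⬝ᵥ φx = 0 := by
  set ψx : Fin 2 × a → ℂ := fun p => xp p.1 * φx p.2 with hψx
  set ψz : Fin 2 × a → ℂ := fun p => zm p.1 * φz p.2 with hψz
  have hsr : star ((Real.sqrt 2 : ℂ)⁻¹) = (Real.sqrt 2 : ℂ)⁻¹ := by
    rw [star_inv₀]
    congr 1
    exact Complex.conj_ofReal _
  have hmul : ((Real.sqrt 2 : ℂ)⁻¹) * ((Real.sqrt 2 : ℂ)⁻¹) = (2 : ℂ)⁻¹ := by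
    rw [← mul_inv]
    congr 1
    rw [← Complex.ofReal_mul, Real.mul_self_sqrt (by norm_num)]
    norm_num
  have hxpnorm : star xp ⬝ᵥ xp = 1 := by
    subst hxp
    simp [dotProduct, Fin.sum_univ_two, hsr, hmul]
    norm_num
  -- ‖ψx‖² = 1
  have hψxnorm : star ψx ⬝ᵥ ψx = 1 := by
    rw [hψx, tensor_dot, hxpnorm, hφx, one_mul]
  -- (1 - E) ψx = 0
  have h1 : (1 - E) *ᵥ ψx = 0 := by
    refine (hE'.dotProduct_mulVec_zero_iff _).mp ?_
    rw [sub_mulVec, one_mulVec, dotProduct_sub, hψxnorm, hpx, sub_self]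
  have hEx : E *ᵥ ψx = ψx := by
    rw [sub_mulVec, one_mulVec, sub_eq_zero] at h1
    exact h1.symm
  -- E ψz = 0
  have h2 : E *ᵥ ψz = 0 := (hE.dotProduct_mulVec_zero_iff _).mp hmz
  have key : star ψz ⬝ᵥ ψx = 0 := by
    calc star ψz ⬝ᵥ ψx = star ψz ⬝ᵥ (E *ᵥ ψx) := by rw [hEx]
      _ = star (E *ᵥ ψz) ⬝ᵥ ψx := by
            rw [dotProduct_mulVec, star_mulVec, hE.1]
      _ = 0 := by rw [h2]; simp
  rw [hψz, hψx, tensor_dot] at key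
  have hzmxp : star zm ⬝ᵥ xp = (Real.sqrt 2 : ℂ)⁻¹ := by
    subst hzm hxp
    simp [dotProduct, Fin.sum_univ_two]
  rw [hzmxp] at key
  have h2ne : ((Real.sqrt 2 : ℂ)⁻¹) ≠ 0 := by
    simp [Real.sqrt_eq_zero']
  exact (mul_eq_zero.mp key).resolve_left h2ne
end

section
/- Let |α⟩, |β⟩ be unit vectors in H_s with ⟨α|β⟩ ≠ 0, and let |φ₁⟩, |φ₂⟩ be unit vectors in H_a. If there is an effect E on H_s ⊗ H_a with ⟨α⊗φ₁|E|α⊗φ₁⟩ = 1 and ⟨β⊗φ₂|E|β⊗φ₂⟩ = 0, then ⟨φ₁|φ₂⟩ = 0. -/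
open Matrix
open scoped ComplexOrder
open scoped Kronecker

lemma tensor_dotProduct {s a : Type*} [Fintype s] [Fintype a]
    (α β : s → ℂ) (φ₁ φ₂ : a → ℂ) :
    star (fun p : s × a => α p.1 * φ₁ p.2) ⬝ᵥ (fun p : s × a => β p.1 * φ₂ p.2)
      = (star α ⬝ᵥ β) * (star φ₁ ⬝ᵥ φ₂) := by
  simp only [dotProduct, Pi.star_apply, Fintype.sum_prod_type, star_mul',
    Finset.sum_mul, Finset.mul_sum]
  rw [Finset.sum_comm]
  exact Finset.sum_congr rfl fun _ _ => Finset.sum_congr rfl fun _ _ => by ring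

/-- If an effect `E` on `H_s ⊗ H_a` accepts `α ⊗ φ₁` with certainty and rejects
`β ⊗ φ₂` with certainty, while `⟨α|β⟩ ≠ 0`, then the program states `φ₁`, `φ₂`
must be orthogonal. -/
theorem effect_discrimination_forces_orthogonal_programs
    {s a : Type*} [Fintype s] [DecidableEq s] [Fintype a] [DecidableEq a]
    (α β : s → ℂ) (hα : star α ⬝ᵥ α = 1) (hβ : star β ⬝ᵥ β = 1)
    (hab : star α ⬝ᵥ β ≠ 0)
    (φ₁ φ₂ : a → ℂ) (hφ₁ : star φ₁ ⬝ᵥ φ₁ = 1) (hφ₂ : star φ₂ ⬝ᵥ φ₂ = 1)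
    (E : Matrix (s × a) (s × a) ℂ) (hE : E.PosSemidef) (hE' : (1 - E).PosSemidef)
    (h₁ : star (fun p : s × a => α p.1 * φ₁ p.2) ⬝ᵥ
        (E *ᵥ fun p : s × a => α p.1 * φ₁ p.2) = 1)
    (h₂ : star (fun p : s × a => β p.1 * φ₂ p.2) ⬝ᵥ
        (E *ᵥ fun p : s × a => β p.1 * φ₂ p.2) = 0) :
    star φ₁ ⬝ᵥ φ₂ = 0 := by
  set u : s × a → ℂ := fun p => α p.1 * φ₁ p.2 with hu
  set v : s × a → ℂ := fun p => β p.1 * φ₂ p.2 with hv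
  have huu : star u ⬝ᵥ u = 1 := by
    rw [hu, tensor_dotProduct, hα, hφ₁, one_mul]
  -- (1 - E) u = 0
  have h1u : (1 - E) *ᵥ u = 0 := by
    rw [← hE'.dotProduct_mulVec_zero_iff]
    rw [sub_mulVec, one_mulVec, dotProduct_sub, huu, h₁, sub_self]
  have hEu : E *ᵥ u = u := by
    have := h1u
    rw [sub_mulVec, one_mulVec, sub_eq_zero] at this
    exact this.symm
  have hEv : E *ᵥ v = 0 := (hE.dotProduct_mulVec_zero_iff v).mp h₂
  have key : star u ⬝ᵥ v = 0 := by
    calc star u ⬝ᵥ v = star (E *ᵥ u) ⬝ᵥ v := by rw [hEu]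
      _ = star u ⬝ᵥ (E *ᵥ v) := by
          rw [star_mulVec, ← dotProduct_mulVec, hE.isHermitian.eq]
      _ = 0 := by rw [hEv, dotProduct_zero]
  rw [hu, hv, tensor_dotProduct] at key
  exact (mul_eq_zero.mp key).resolve_left hab
end

section
/- Let U, V be distinct unitaries on H_s (distinct even up to global phase: V ≠ e^{iθ}U for all θ), and let |φ_U⟩, |φ_V⟩ be unit program states in H_a. If there exists a unitary W on H_s⊗H_a such that W(|ψ⟩⊗|φ_U⟩) = (U|ψ⟩)⊗|φ'_U(ψ)⟩ and W(|ψ⟩⊗|φ_V⟩) = (V|ψ⟩)⊗|φ'_V(ψ)⟩ for all unit |ψ⟩ ∈ H_s (with the residual program states |φ'_U⟩, |φ'_V⟩ independent of ψ), then ⟨φ_U|φ_V⟩ = 0. -/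
open Matrix
open scoped ComplexOrder

lemma quad_eq_smul_one {s : Type*} [Fintype s] [DecidableEq s]
    (M : Matrix s s ℂ) (μ : ℂ)
    (h : ∀ ψ : s → ℂ, star ψ ⬝ᵥ ψ = 1 → star ψ ⬝ᵥ (M *ᵥ ψ) = μ) :
    M = μ • (1 : Matrix s s ℂ) := by
  have hdiag : ∀ i, M i i = μ := by
    intro i
    have h1 := h (Pi.single i 1) (by simp [← Pi.single_star])
    simpa [← Pi.single_star] using h1
  have h2 : ∀ ψ : s → ℂ, star ψ ⬝ᵥ ψ = 2 → star ψ ⬝ᵥ (M *ᵥ ψ) = 2 * μ := by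
    intro ψ hψ
    set r : ℝ := (Real.sqrt 2)⁻¹ with hr
    have hr2 : r * r = 2⁻¹ := by
      rw [hr, ← mul_inv, Real.mul_self_sqrt (by norm_num : (0:ℝ) ≤ 2)]
    have hrr : (r : ℂ) * (r : ℂ) = (2 : ℂ)⁻¹ := by
      rw [← Complex.ofReal_mul, hr2]; norm_num
    have hsn : star ((r : ℂ) • ψ) ⬝ᵥ ((r : ℂ) • ψ) = 1 := by
      rw [star_smul, smul_dotProduct, dotProduct_smul, hψ]
      simp only [smul_eq_mul, Complex.star_def, Complex.conj_ofReal]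
      rw [← mul_assoc, hrr]
      norm_num
    have h3 := h ((r : ℂ) • ψ) hsn
    rw [star_smul, Matrix.mulVec_smul, smul_dotProduct, dotProduct_smul] at h3
    simp only [smul_eq_mul, Complex.star_def, Complex.conj_ofReal, ← mul_assoc, hrr] at h3
    field_simp at h3
    rw [h3]
  -- off-diagonal entries vanish
  ext i j
  by_cases hij : i = j
  · subst hij; simp [hdiag i, Matrix.one_apply_eq]
  · have key : ∀ z : ℂ, star z * z = 1 →
        z * M i j + (starRingEnd ℂ) z * M j i = 0 := by
      intro z hz
      have hn : star ((Pi.single i 1 : s → ℂ) + Pi.single j z) ⬝ᵥ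
          ((Pi.single i 1 : s → ℂ) + Pi.single j z) = 2 := by
        simp [← Pi.single_star, dotProduct_add, add_dotProduct, Pi.single_apply,
          Ne.symm hij, hij, hz]
        rw [show (starRingEnd ℂ) z * z = 1 from hz]; norm_num
      have hq := h2 _ hn
      simp [← Pi.single_star, dotProduct_add, add_dotProduct, Matrix.mulVec_add,
        Pi.single_apply, Ne.symm hij, hij, hdiag] at hq
      have hz' : (starRingEnd ℂ) z * z = 1 := hz
      linear_combination hq - μ * hz'
    have k1 := key 1 (by norm_num)
    have k2 := key Complex.I (by simp)
    simp at k1 k2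
    have k2' : M i j - M j i = 0 := by
      have hI : Complex.I * (M i j - M j i) = 0 := by linear_combination k2
      rcases mul_eq_zero.mp hI with h' | h'
      · exact absurd h' Complex.I_ne_zero
      · exact h'
    rw [Matrix.smul_apply, Matrix.one_apply_ne hij, smul_zero]
    linear_combination (k1 + k2') / 2

/-- No-programming theorem for unitaries: if a programmable gate array `W`
implements the unitaries `U` and `V` (distinct even up to global phase) via
program states `φU`, `φV` with residual program states independent of the data,
then `⟨φU|φV⟩ = 0`. -/
theorem no_programming_unitaries
    {s a : Type*} [Fintype s] [DecidableEq s] [Fintype a] [DecidableEq a]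
    (U V : Matrix s s ℂ)
    (hU : U ∈ Matrix.unitaryGroup s ℂ) (hV : V ∈ Matrix.unitaryGroup s ℂ)
    (hdist : ∀ θ : ℝ, V ≠ Complex.exp (θ * Complex.I) • U)
    (φU φV : a → ℂ) (hφU : star φU ⬝ᵥ φU = 1) (hφV : star φV ⬝ᵥ φV = 1)
    (W : Matrix (s × a) (s × a) ℂ) (hW : W ∈ Matrix.unitaryGroup (s × a) ℂ)
    (φU' φV' : a → ℂ)
    (hWU : ∀ ψ : s → ℂ, star ψ ⬝ᵥ ψ = 1 →
      W *ᵥ (fun p : s × a => ψ p.1 * φU p.2) =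
        (fun p : s × a => (U *ᵥ ψ) p.1 * φU' p.2))
    (hWV : ∀ ψ : s → ℂ, star ψ ⬝ᵥ ψ = 1 →
      W *ᵥ (fun p : s × a => ψ p.1 * φV p.2) =
        (fun p : s × a => (V *ᵥ ψ) p.1 * φV' p.2)) :
    star φU ⬝ᵥ φV = 0 := by
  by_cases hs : Nonempty s
  swap
  · exact absurd (by ext i j; exact absurd ⟨i⟩ hs) (hdist 0)
  obtain ⟨i0⟩ := hs
  by_contra hk
  -- W preserves inner products
  have hWpres : ∀ x y : s × a → ℂ, star (W *ᵥ x) ⬝ᵥ (W *ᵥ y) = star x ⬝ᵥ y := by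
    intro x y
    rw [Matrix.star_mulVec, Matrix.dotProduct_mulVec, Matrix.vecMul_vecMul,
      ← Matrix.star_eq_conjTranspose, Unitary.star_mul_self_of_mem hW, Matrix.vecMul_one]
  -- tensor product factorization of dot products
  have hprod : ∀ (x y : s → ℂ) (u v : a → ℂ),
      star (fun p : s × a => x p.1 * u p.2) ⬝ᵥ (fun p : s × a => y p.1 * v p.2)
        = (star x ⬝ᵥ y) * (star u ⬝ᵥ v) := by
    intro x y u v
    simp only [dotProduct, Pi.star_apply, star_mul']
    rw [Finset.sum_mul_sum, Fintype.sum_prod_type]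
    refine Finset.sum_congr rfl fun i _ => Finset.sum_congr rfl fun m _ => ?_
    ring
  set k := star φU ⬝ᵥ φV with hkdef
  set c := star φU' ⬝ᵥ φV' with hcdef
  have key : ∀ ψ : s → ℂ, star ψ ⬝ᵥ ψ = 1 →
      k = (star (U *ᵥ ψ) ⬝ᵥ (V *ᵥ ψ)) * c := by
    intro ψ hψ
    have h1 := hWpres (fun p => ψ p.1 * φU p.2) (fun p => ψ p.1 * φV p.2)
    rw [hWU ψ hψ, hWV ψ hψ, hprod, hprod, hψ, one_mul] at h1
    exact h1.symm
  have hunit : star (Pi.single i0 1 : s → ℂ) ⬝ᵥ (Pi.single i0 1 : s → ℂ) = 1 := by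
    simp [← Pi.single_star]
  have hc : c ≠ 0 := by
    intro h0
    exact hk (by rw [key _ hunit, h0, mul_zero])
  -- quadratic form is constant on unit vectors
  have hM : Uᴴ * V = (k / c) • (1 : Matrix s s ℂ) := by
    apply quad_eq_smul_one
    intro ψ hψ
    have h1 := key ψ hψ
    have h2 : star (U *ᵥ ψ) ⬝ᵥ (V *ᵥ ψ) = star ψ ⬝ᵥ ((Uᴴ * V) *ᵥ ψ) := by
      rw [Matrix.star_mulVec, Matrix.dotProduct_mulVec, Matrix.dotProduct_mulVec,
        Matrix.vecMul_vecMul]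
    rw [h2] at h1
    field_simp [h1]
    exact h1.symm
  set μ := k / c with hμdef
  have hμ0 : μ ≠ 0 := div_ne_zero hk hc
  have hVeq : V = μ • U := by
    have h3 : U * (Uᴴ * V) = V := by
      rw [← Matrix.mul_assoc, ← Matrix.star_eq_conjTranspose,
        Unitary.mul_star_self_of_mem hU, Matrix.one_mul]
    rw [← h3, hM, Matrix.mul_smul, Matrix.mul_one]
  -- |μ| = 1
  have habs : ‖μ‖ = 1 := by
    have h4 : (star V : Matrix s s ℂ) * V = 1 := Unitary.star_mul_self_of_mem hV
    rw [hVeq, star_smul, Matrix.smul_mul, Matrix.mul_smul, smul_smul,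
      Unitary.star_mul_self_of_mem hU] at h4
    have h5 := congrFun (congrFun h4 i0) i0
    simp only [Matrix.smul_apply, Matrix.one_apply_eq, smul_eq_mul, mul_one] at h5
    have h6 : Complex.normSq μ = 1 := by
      have : ((Complex.normSq μ : ℝ) : ℂ) = 1 := by
        rw [← Complex.mul_conj, mul_comm]; exact h5
      exact_mod_cast this
    rw [Complex.norm_def, h6, Real.sqrt_one]
  have h7 : μ = Complex.exp (μ.arg * Complex.I) := by
    have := Complex.norm_mul_exp_arg_mul_I μ
    rw [habs] at this
    simpa using this.symm
  exact hdist μ.arg (by rw [hVeq, ← h7])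
end

section
/- Let G be a finite group with unitary representations U_s on H_s and U_a on H_a, and suppose there exists a POVM {Q_k} on H_s⊗H_a and a state ρ_a such that Tr(Q_k(ρ_s ⊗ U_a(g)ρ_aU_a(g)†)) = Tr(U_s(g)Π_kU_s(g)†ρ_s) for all g ∈ G, all states ρ_s, and all k. Then the group-averaged POVM E_k = (1/|G|)Σ_{g∈G} (U_s(g)⊗U_a(g)) Q_k (U_s(g)⊗U_a(g))† is a symmetric POVM satisfying Tr(E_k(ρ_s⊗ρ_a)) = Tr(Π_kρ_s) for all ρ_s and k. -/
open Matrix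
open scoped ComplexOrder Kronecker

lemma kron_conjT {m n p q : Type*} (A : Matrix m n ℂ) (B : Matrix p q ℂ) :
    (A ⊗ₖ B)ᴴ = Aᴴ ⊗ₖ Bᴴ := by
  ext ⟨i, j⟩ ⟨k, l⟩
  simp [Matrix.conjTranspose_apply, Matrix.kroneckerMap_apply]

lemma smul_posSemidef {n : Type*} [Fintype n] {c : ℂ} (hc : 0 ≤ c)
    {M : Matrix n n ℂ} (hM : M.PosSemidef) : (c • M).PosSemidef := by
  have him : c.im = 0 := ((Complex.le_def.mp hc).2).symm
  have hstar : star c = c := Complex.conj_eq_iff_im.mpr him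
  constructor
  · show (c • M)ᴴ = c • M
    rw [Matrix.conjTranspose_smul, hstar, hM.isHermitian.eq]
  · intro x
    have h := mul_nonneg hc (hM.2 x)
    simp only [Finsupp.mul_sum] at h
    refine le_of_le_of_eq h ?_
    refine Finsupp.sum_congr fun i _ => Finsupp.sum_congr fun j _ => ?_
    simp only [Matrix.smul_apply, smul_eq_mul]
    ring

/-- Nontrivial direction of the duality lemma: if some POVM `{Q k}` covariantly
programs the group orbit of `{P k}` using the orbit of `ρa`, then the
group-averaged POVM `E_k = (1/|G|) Σ_g (U_s(g)⊗U_a(g)) Q_k (U_s(g)⊗U_a(g))†`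
is a symmetric POVM simulating `{P k}` from `ρa`. -/
theorem group_average_gives_symmetric_simulation
    {G : Type*} [Group G] [Fintype G]
    {s a κ : Type*} [Fintype s] [DecidableEq s] [Fintype a] [DecidableEq a] [Fintype κ]
    (Us : G →* Matrix.unitaryGroup s ℂ) (Ua : G →* Matrix.unitaryGroup a ℂ)
    (ρa : Matrix a a ℂ) (hρa : ρa.PosSemidef) (hρatr : ρa.trace = 1)
    (P : κ → Matrix s s ℂ)
    (hherm : ∀ k, (P k).IsHermitian) (hidem : ∀ k, P k * P k = P k)
    (horth : ∀ k l, k ≠ l → P k * P l = 0) (hsum : ∑ k, P k = 1)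
    (Q : κ → Matrix (s × a) (s × a) ℂ)
    (hQpos : ∀ k, (Q k).PosSemidef) (hQsum : ∑ k, Q k = 1)
    (hsim : ∀ (g : G) (k : κ), ∀ ρs : Matrix s s ℂ, ρs.PosSemidef → ρs.trace = 1 →
      (Q k * (ρs ⊗ₖ ((Ua g : Matrix a a ℂ) * ρa * (Ua g : Matrix a a ℂ)ᴴ))).trace =
      ((Us g : Matrix s s ℂ) * P k * (Us g : Matrix s s ℂ)ᴴ * ρs).trace)
    (E : κ → Matrix (s × a) (s × a) ℂ)
    (hE : E = fun k => ((Fintype.card G : ℂ))⁻¹ •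
      ∑ g : G, ((Us g : Matrix s s ℂ) ⊗ₖ (Ua g : Matrix a a ℂ)) * Q k *
        ((Us g : Matrix s s ℂ) ⊗ₖ (Ua g : Matrix a a ℂ))ᴴ) :
    (∀ k, (E k).PosSemidef) ∧ (∑ k, E k = 1) ∧
    (∀ k (g : G), E k * ((Us g : Matrix s s ℂ) ⊗ₖ (Ua g : Matrix a a ℂ)) =
      ((Us g : Matrix s s ℂ) ⊗ₖ (Ua g : Matrix a a ℂ)) * E k) ∧
    (∀ k, ∀ ρs : Matrix s s ℂ, ρs.PosSemidef → ρs.trace = 1 →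
      (E k * (ρs ⊗ₖ ρa)).trace = (P k * ρs).trace) := by
  classical
  -- abbreviate the representation
  obtain ⟨v, hv⟩ : ∃ v : G → Matrix (s × a) (s × a) ℂ,
      v = fun g => (Us g : Matrix s s ℂ) ⊗ₖ (Ua g : Matrix a a ℂ) := ⟨_, rfl⟩
  have hv' : ∀ g : G, ((Us g : Matrix s s ℂ) ⊗ₖ (Ua g : Matrix a a ℂ)) = v g :=
    fun g => (congrFun hv g).symm
  simp only [hv'] at hE ⊢
  -- basic facts about Us, Ua
  have hUsH : ∀ g : G, ((Us g : Matrix s s ℂ))ᴴ = ((Us g⁻¹ : Matrix s s ℂ)) := by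
    intro g
    rw [map_inv, Matrix.UnitaryGroup.inv_val, Matrix.star_eq_conjTranspose]
  have hUaH : ∀ g : G, ((Ua g : Matrix a a ℂ))ᴴ = ((Ua g⁻¹ : Matrix a a ℂ)) := by
    intro g
    rw [map_inv, Matrix.UnitaryGroup.inv_val, Matrix.star_eq_conjTranspose]
  have hUsmul : ∀ g h : G, (Us g : Matrix s s ℂ) * (Us h : Matrix s s ℂ) =
      (Us (g * h) : Matrix s s ℂ) := by
    intro g h; rw [_root_.map_mul]; rfl
  have hUamul : ∀ g h : G, (Ua g : Matrix a a ℂ) * (Ua h : Matrix a a ℂ) =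
      (Ua (g * h) : Matrix a a ℂ) := by
    intro g h; rw [_root_.map_mul]; rfl
  have hUsU : ∀ g : G, (Us g : Matrix s s ℂ) * ((Us g : Matrix s s ℂ))ᴴ = 1 := by
    intro g
    rw [hUsH, hUsmul, mul_inv_cancel, _root_.map_one]; rfl
  have hUsU' : ∀ g : G, ((Us g : Matrix s s ℂ))ᴴ * (Us g : Matrix s s ℂ) = 1 := by
    intro g
    rw [hUsH, hUsmul, inv_mul_cancel, _root_.map_one]; rfl
  -- basic facts about v
  have hvH : ∀ g : G, (v g)ᴴ = v g⁻¹ := by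
    intro g
    rw [hv]
    simp only
    rw [kron_conjT, hUsH, hUaH]
  have hvmul : ∀ g h : G, v g * v h = v (g * h) := by
    intro g h
    rw [hv]
    simp only
    rw [← Matrix.mul_kronecker_mul, hUsmul, hUamul]
  have hv1 : v 1 = 1 := by
    rw [hv]
    simp only [_root_.map_one]
    rw [Matrix.UnitaryGroup.one_val, Matrix.UnitaryGroup.one_val,
      Matrix.one_kronecker_one]
  have hvv : ∀ g : G, v g * (v g)ᴴ = 1 := by
    intro g; rw [hvH, hvmul, mul_inv_cancel, hv1]
  have hv'v : ∀ g : G, (v g)ᴴ * v g = 1 := by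
    intro g; rw [hvH, hvmul, inv_mul_cancel, hv1]
  have hne : ((Fintype.card G : ℂ)) ≠ 0 := by
    exact_mod_cast Nat.cast_ne_zero.mpr Fintype.card_ne_zero
  have hinv : (0 : ℂ) ≤ ((Fintype.card G : ℂ))⁻¹ := by
    rw [show ((Fintype.card G : ℂ)) = (((Fintype.card G : ℝ)) : ℂ) by push_cast; ring,
      ← Complex.ofReal_inv]
    rw [Complex.zero_le_real]
    positivity
  refine ⟨?_, ?_, ?_, ?_⟩
  · -- positive semidefinite
    intro k
    rw [hE]
    refine smul_posSemidef hinv ?_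
    refine Finset.sum_induction _ _ (fun A B hA hB => hA.add hB) Matrix.PosSemidef.zero ?_
    intro g _
    exact (hQpos k).mul_mul_conjTranspose_same _
  · -- sums to one
    simp only [hE]
    rw [← Finset.smul_sum, Finset.sum_comm]
    have hg : ∀ g : G, ∑ k, v g * Q k * (v g)ᴴ = 1 := by
      intro g
      calc ∑ k, v g * Q k * (v g)ᴴ = v g * (∑ k, Q k) * (v g)ᴴ := by
            rw [Finset.mul_sum, Finset.sum_mul]
        _ = 1 := by rw [hQsum, mul_one, hvv]
    rw [Finset.sum_congr rfl (fun g _ => hg g), Finset.sum_const, Finset.card_univ,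
      ← Nat.cast_smul_eq_nsmul ℂ, smul_smul, inv_mul_cancel₀ hne, one_smul]
  · -- symmetry
    intro k h
    simp only [hE]
    rw [Matrix.smul_mul, Matrix.mul_smul, Finset.sum_mul, Finset.mul_sum]
    congr 1
    refine Fintype.sum_equiv (Equiv.mulLeft h⁻¹) _ _ ?_
    intro x
    have e1 : v h * v (h⁻¹ * x) = v x := by rw [hvmul, mul_inv_cancel_left]
    have e2 : (v (h⁻¹ * x))ᴴ = (v x)ᴴ * v h := by
      have hx : (h⁻¹ * x)⁻¹ = x⁻¹ * h := by group
      rw [hvH, hx, ← hvmul, ← hvH]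
    refine Eq.symm ?_
    calc v h * (v (h⁻¹ * x) * Q k * (v (h⁻¹ * x))ᴴ)
        = (v h * v (h⁻¹ * x)) * Q k * (v (h⁻¹ * x))ᴴ := by
          simp only [mul_assoc]
      _ = v x * Q k * ((v x)ᴴ * v h) := by rw [e1, e2]
      _ = v x * Q k * (v x)ᴴ * v h := by simp only [mul_assoc]
  · -- simulation
    intro k ρs hps hptr
    simp only [hE]
    rw [Matrix.smul_mul, Matrix.trace_smul, Finset.sum_mul, Matrix.trace_sum]
    have hterm : ∀ g : G, (v g * Q k * (v g)ᴴ * (ρs ⊗ₖ ρa)).trace = (P k * ρs).trace := by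
      intro g
      have hconj : (v g)ᴴ * (ρs ⊗ₖ ρa) * v g =
          (((Us g : Matrix s s ℂ))ᴴ * ρs * (Us g : Matrix s s ℂ)) ⊗ₖ
          (((Ua g : Matrix a a ℂ))ᴴ * ρa * (Ua g : Matrix a a ℂ)) := by
        rw [hv]
        simp only
        rw [kron_conjT, ← Matrix.mul_kronecker_mul, ← Matrix.mul_kronecker_mul]
      have hps' : (((Us g : Matrix s s ℂ))ᴴ * ρs * (Us g : Matrix s s ℂ)).PosSemidef :=
        hps.conjTranspose_mul_mul_same _
      have hptr' : (((Us g : Matrix s s ℂ))ᴴ * ρs * (Us g : Matrix s s ℂ)).trace = 1 := by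
        rw [Matrix.trace_mul_cycle, hUsU, one_mul, hptr]
      have hmid : (((Ua g : Matrix a a ℂ))ᴴ * ρa * (Ua g : Matrix a a ℂ)) =
          ((Ua g⁻¹ : Matrix a a ℂ) * ρa * ((Ua g⁻¹ : Matrix a a ℂ))ᴴ) := by
        rw [hUaH g, hUaH g⁻¹, inv_inv]
      calc (v g * Q k * (v g)ᴴ * (ρs ⊗ₖ ρa)).trace
          = (Q k * ((v g)ᴴ * (ρs ⊗ₖ ρa) * v g)).trace := by
            rw [show v g * Q k * (v g)ᴴ * (ρs ⊗ₖ ρa) =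
              v g * (Q k * ((v g)ᴴ * (ρs ⊗ₖ ρa))) by simp only [mul_assoc],
              Matrix.trace_mul_comm]
            simp only [mul_assoc]
        _ = (Q k * ((((Us g : Matrix s s ℂ))ᴴ * ρs * (Us g : Matrix s s ℂ)) ⊗ₖ
              ((Ua g⁻¹ : Matrix a a ℂ) * ρa * ((Ua g⁻¹ : Matrix a a ℂ))ᴴ))).trace := by
            rw [hconj, hmid]
        _ = ((Us g⁻¹ : Matrix s s ℂ) * P k * ((Us g⁻¹ : Matrix s s ℂ))ᴴ *
              (((Us g : Matrix s s ℂ))ᴴ * ρs * (Us g : Matrix s s ℂ))).trace :=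
            hsim g⁻¹ k _ hps' hptr'
        _ = (P k * ρs).trace := by
            rw [← hUsH g, Matrix.conjTranspose_conjTranspose]
            rw [show ((Us g : Matrix s s ℂ))ᴴ * P k * (Us g : Matrix s s ℂ) *
              (((Us g : Matrix s s ℂ))ᴴ * ρs * (Us g : Matrix s s ℂ)) =
              ((Us g : Matrix s s ℂ))ᴴ * (P k * ((Us g : Matrix s s ℂ) *
                ((Us g : Matrix s s ℂ))ᴴ) * ρs * (Us g : Matrix s s ℂ)) by
                simp only [mul_assoc]]
            rw [hUsU, mul_one, Matrix.trace_mul_comm, mul_assoc (P k * ρs), hUsU, mul_one]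
    rw [Finset.sum_congr rfl (fun g _ => hterm g), Finset.sum_const, Finset.card_univ,
      nsmul_eq_mul, smul_eq_mul, inv_mul_cancel_left₀ hne]
end
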